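/- Let n ≥ 3 and let Cₙ denote the cycle graph on n vertices. Then for every finite simple graph G and every Whitney flip G' of G, i(Cₙ, G) = i(Cₙ, G'); that is, the number of induced n-cycles of a graph is invariant under Whitney flips. -/

import Mathlib

open SimpleGraph

/-- `graphCount H G` is the number of vertex subsets `S ⊆ V(G)` such that the induced
subgraph `G[S]` is isomorphic to `H`. -/
noncomputable def graphCount {α β : Type*} [Fintype β]
    (H : SimpleGraph α) (G : SimpleGraph β) : ℕ :=
  Nat.card {S : Finset β // Nonempty (G.induce (S : Set β) ≃g H)}

/-- `G'` is a Whitney flip of `G`: there are distinct vertices `u, v` and a partition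
`V(G) \ {u, v} = A ⊔ B` with no `G`-edge between `A` and `B`, such that `G'` is obtained
from `G` by keeping the adjacencies inside `A ∪ {u, v}` and inside `B`, and reattaching
`B` to `u, v` with the roles of `u` and `v` interchanged. -/
def IsWhitneyFlip {V : Type*} (G G' : SimpleGraph V) : Prop :=
  ∃ (u v : V) (A B : Set V), u ≠ v ∧
    A ∪ B = ({u, v} : Set V)ᶜ ∧ Disjoint A B ∧
    (∀ a ∈ A, ∀ b ∈ B, ¬ G.Adj a b) ∧
    (∀ x y : V, G'.Adj x y ↔
      (x ∈ A ∪ {u, v} ∧ y ∈ A ∪ {u, v} ∧ G.Adj x y) ∨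
      (x ∈ B ∧ y ∈ B ∧ G.Adj x y) ∨
      (x ∈ B ∧ y = u ∧ G.Adj x v) ∨ (x = u ∧ y ∈ B ∧ G.Adj v y) ∨
      (x ∈ B ∧ y = v ∧ G.Adj x u) ∨ (x = v ∧ y ∈ B ∧ G.Adj u y))

namespace WhitneyAux

open Fin.CommRing

/-! ### Arc lemmas on the cycle graph -/

section Arc
variable {m : ℕ} (P Q : Set (Fin (m+3)))

lemma mono_lem
    (hcr : ∀ i j, (cycleGraph (m+3)).Adj i j → i ∈ P → j ∈ Q → False)
    (p : Fin (m+3)) (a b : ℕ) (hab : a ≤ b)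
    (htot : ∀ t : ℕ, a ≤ t → t ≤ b → p + (t : Fin (m+3)) ∈ P ∨ p + (t : Fin (m+3)) ∈ Q) :
    (p + (a : Fin (m+3)) ∈ P ↔ p + (b : Fin (m+3)) ∈ P) := by
  induction b, hab using Nat.le_induction with
  | base => exact Iff.rfl
  | succ b hab ih =>
    have ih' := ih (fun t ht htb => htot t ht (htb.trans (Nat.le_succ b)))
    have hadj : (cycleGraph (m+3)).Adj (p + (b : Fin (m+3))) (p + ((b+1:ℕ) : Fin (m+3))) := by
      rw [cycleGraph_adj]; right; push_cast; ring
    rw [ih']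
    constructor
    · intro h
      rcases htot (b+1) (by omega) le_rfl with h' | h'
      · exact h'
      · exact (hcr _ _ hadj h h').elim
    · intro h
      rcases htot b (by omega) (by omega) with h' | h'
      · exact h'
      · exact (hcr _ _ hadj.symm h h').elim

lemma conn_lem'
    (hcr : ∀ i j, (cycleGraph (m+3)).Adj i j → i ∈ P → j ∈ Q → False)
    (hdisj : ∀ i, i ∈ P → i ∈ Q → False)
    (htot : ∀ i, i ∈ P ∨ i ∈ Q)
    (hPn : P.Nonempty) (hQn : Q.Nonempty) : False := by
  obtain ⟨i0, hi0⟩ := hPn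
  obtain ⟨j0, hj0⟩ := hQn
  have key := mono_lem P Q hcr i0 0 ((j0 - i0).val) (Nat.zero_le _)
    (fun t _ _ => htot _)
  rw [Nat.cast_zero, add_zero, Fin.cast_val_eq_self, add_sub_cancel] at key
  exact hdisj j0 (key.mp hi0) hj0

lemma conn_lem
    (hcr : ∀ i j, (cycleGraph (m+3)).Adj i j → i ∈ P → j ∈ Q → False)
    (hdisj : ∀ i, i ∈ P → i ∈ Q → False)
    (p : Fin (m+3))
    (hpP : p ∉ P) (hpQ : p ∉ Q)
    (htot : ∀ i, i = p ∨ i ∈ P ∨ i ∈ Q)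
    (hPn : P.Nonempty) (hQn : Q.Nonempty) : False := by
  obtain ⟨i0, hi0⟩ := hPn
  obtain ⟨j0, hj0⟩ := hQn
  set a := (i0 - p).val with ha
  set b := (j0 - p).val with hb
  have hia : i0 = p + (a : Fin (m+3)) := by rw [ha, Fin.cast_val_eq_self]; ring
  have hjb : j0 = p + (b : Fin (m+3)) := by rw [hb, Fin.cast_val_eq_self]; ring
  have ha1 : 1 ≤ a := by
    rcases Nat.eq_zero_or_pos a with h | h
    · exfalso
      have h0 : i0 - p = 0 := by apply Fin.ext; rw [← ha, h, Fin.val_zero]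
      rw [sub_eq_zero] at h0
      exact hpP (h0 ▸ hi0)
    · exact h
  have hb1 : 1 ≤ b := by
    rcases Nat.eq_zero_or_pos b with h | h
    · exfalso
      have h0 : j0 - p = 0 := by apply Fin.ext; rw [← hb, h, Fin.val_zero]
      rw [sub_eq_zero] at h0
      exact hpQ (h0 ▸ hj0)
    · exact h
  have haN : a < m+3 := Fin.is_lt _
  have hbN : b < m+3 := Fin.is_lt _
  have htot' : ∀ t : ℕ, 1 ≤ t → t < m+3 → p + (t : Fin (m+3)) ∈ P ∨ p + (t : Fin (m+3)) ∈ Q := by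
    intro t h1 h2
    rcases htot (p + (t : Fin (m+3))) with h | h | h
    · exfalso
      rw [add_eq_left] at h
      have := congrArg Fin.val h
      rw [Fin.val_cast_of_lt h2, Fin.val_zero] at this
      omega
    · exact Or.inl h
    · exact Or.inr h
  rcases le_total a b with h | h
  · have key := mono_lem P Q hcr p a b h (fun t ht1 ht2 => htot' t (by omega) (by omega))
    rw [← hia, ← hjb] at key
    exact hdisj j0 (key.mp hi0) hj0
  · have key := mono_lem P Q hcr p b a h (fun t ht1 ht2 => htot' t (by omega) (by omega))
    rw [← hia, ← hjb] at key
    exact hdisj j0 (key.mpr hi0) hj0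

lemma arc_lem
    (hcr : ∀ i j, (cycleGraph (m+3)).Adj i j → i ∈ P → j ∈ Q → False)
    (p q : Fin (m+3)) (hpq : p ≠ q)
    (hpP : p ∉ P) (hqP : q ∉ P)
    (htot : ∀ i, i = p ∨ i = q ∨ i ∈ P ∨ i ∈ Q)
    {i : Fin (m+3)} (hi : i ∈ P) : p + q - i ∈ P := by
  set a := (i - p).val with ha
  set d := (q - p).val with hd
  have hia : i = p + (a : Fin (m+3)) := by rw [ha, Fin.cast_val_eq_self]; ring
  have hqd : q = p + (d : Fin (m+3)) := by rw [hd, Fin.cast_val_eq_self]; ring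
  have haN : a < m+3 := Fin.is_lt _
  have hdN : d < m+3 := Fin.is_lt _
  have ha1 : 1 ≤ a := by
    rcases Nat.eq_zero_or_pos a with h | h
    · exfalso
      have h0 : i - p = 0 := by apply Fin.ext; rw [← ha, h, Fin.val_zero]
      rw [sub_eq_zero] at h0
      exact hpP (h0 ▸ hi)
    · exact h
  have hd1 : 1 ≤ d := by
    rcases Nat.eq_zero_or_pos d with h | h
    · exfalso
      have h0 : q - p = 0 := by apply Fin.ext; rw [← hd, h, Fin.val_zero]
      rw [sub_eq_zero] at h0
      exact hpq h0.symm
    · exact h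
  have had : a ≠ d := by
    intro h
    have : i = q := by rw [hia, hqd, h]
    exact hqP (this ▸ hi)
  set t : ℕ := if a < d then d - a else (m+3) + d - a with ht
  have hrefl : p + q - i = p + (t : Fin (m+3)) := by
    rw [hia, hqd]
    by_cases hc : a < d
    · rw [ht, if_pos hc]
      push_cast [Nat.cast_sub hc.le]
      ring
    · rw [ht, if_neg hc]
      have h1 : a ≤ (m+3) + d := by omega
      have hz : (((m+3 : ℕ)) : Fin (m+3)) = 0 := by simp
      push_cast [Nat.cast_sub h1] at hz ⊢
      linear_combination -hz
  have htot' : ∀ s : ℕ, 1 ≤ s → s < m+3 → s ≠ d →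
      p + (s : Fin (m+3)) ∈ P ∨ p + (s : Fin (m+3)) ∈ Q := by
    intro s h1 h2 h3
    rcases htot (p + (s : Fin (m+3))) with h | h | h | h
    · exfalso
      rw [add_eq_left] at h
      have := congrArg Fin.val h
      rw [Fin.val_cast_of_lt h2, Fin.val_zero] at this
      omega
    · exfalso
      rw [hqd] at h
      have h' := add_left_cancel h
      have := congrArg Fin.val h'
      rw [Fin.val_cast_of_lt h2, Fin.val_cast_of_lt hdN] at this
      omega
    · exact Or.inl h
    · exact Or.inr h
  rw [hrefl]
  rw [hia] at hi
  by_cases hc : a < d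
  · have htb : t = d - a := by rw [ht, if_pos hc]
    rcases le_total a t with h | h
    · exact (mono_lem P Q hcr p a t h
        (fun s hs1 hs2 => htot' s (by omega) (by omega) (by omega))).mp hi
    · exact (mono_lem P Q hcr p t a h
        (fun s hs1 hs2 => htot' s (by omega) (by omega) (by omega))).mpr hi
  · have hda : d < a := by omega
    have htb : t = (m+3) + d - a := by rw [ht, if_neg hc]
    rcases le_total a t with h | h
    · exact (mono_lem P Q hcr p a t h
        (fun s hs1 hs2 => htot' s (by omega) (by omega) (by omega))).mp hi
    · exact (mono_lem P Q hcr p t a h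
        (fun s hs1 hs2 => htot' s (by omega) (by omega) (by omega))).mpr hi

lemma adj_reflect {c i j : Fin (m+3)} :
    (cycleGraph (m+3)).Adj (c - i) (c - j) ↔ (cycleGraph (m+3)).Adj i j := by
  rw [cycleGraph_adj, cycleGraph_adj, show c - i - (c - j) = j - i from by ring,
    show c - j - (c - i) = i - j from by ring]
  tauto

end Arc

/-! ### Regional adjacency lemmas for a Whitney flip -/

section Regional

variable {V : Type*} {G G' : SimpleGraph V} {u v : V} {A B : Set V}
variable (huv : u ≠ v) (hcover : A ∪ B = ({u, v} : Set V)ᶜ) (hdisj : Disjoint A B)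
variable (hno : ∀ a ∈ A, ∀ b ∈ B, ¬ G.Adj a b)
variable (h5 : ∀ x y : V, G'.Adj x y ↔
      (x ∈ A ∪ {u, v} ∧ y ∈ A ∪ {u, v} ∧ G.Adj x y) ∨
      (x ∈ B ∧ y ∈ B ∧ G.Adj x y) ∨
      (x ∈ B ∧ y = u ∧ G.Adj x v) ∨ (x = u ∧ y ∈ B ∧ G.Adj v y) ∨
      (x ∈ B ∧ y = v ∧ G.Adj x u) ∨ (x = v ∧ y ∈ B ∧ G.Adj u y))

include hcover in
lemma not_mem_B_of_mem : ∀ x ∈ ({u, v} : Set V), x ∉ A ∪ B := by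
  intro x hx
  rw [hcover]
  exact fun h => h hx

include hcover in
lemma huB : u ∉ B := fun h => not_mem_B_of_mem hcover u (by simp) (Or.inr h)

include hcover in
lemma hvB : v ∉ B := fun h => not_mem_B_of_mem hcover v (by simp) (Or.inr h)

include hcover in
lemma huA : u ∉ A := fun h => not_mem_B_of_mem hcover u (by simp) (Or.inl h)

include hcover in
lemma hvA : v ∉ A := fun h => not_mem_B_of_mem hcover v (by simp) (Or.inl h)

include hcover hdisj in
lemma hBfacts : ∀ b ∈ B, b ≠ u ∧ b ≠ v ∧ b ∉ A := by
  intro b hb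
  have h1 : b ∈ ({u, v} : Set V)ᶜ := hcover ▸ Or.inr hb
  simp only [Set.mem_compl_iff, Set.mem_insert_iff, Set.mem_singleton_iff] at h1
  exact ⟨fun h => h1 (Or.inl h), fun h => h1 (Or.inr h), hdisj.symm.subset_compl_right hb⟩

include hcover hdisj in
lemma hAfacts : ∀ a ∈ A, a ≠ u ∧ a ≠ v ∧ a ∉ B := by
  intro a ha
  have h1 : a ∈ ({u, v} : Set V)ᶜ := hcover ▸ Or.inl ha
  simp only [Set.mem_compl_iff, Set.mem_insert_iff, Set.mem_singleton_iff] at h1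
  exact ⟨fun h => h1 (Or.inl h), fun h => h1 (Or.inr h), hdisj.subset_compl_right ha⟩

include hcover in
lemma htotV : ∀ x : V, x = u ∨ x = v ∨ x ∈ A ∨ x ∈ B := by
  intro x
  by_cases h1 : x = u; · tauto
  by_cases h2 : x = v; · tauto
  have : x ∈ A ∪ B := by rw [hcover]; simp [h1, h2]
  rcases this with h | h <;> tauto

include hcover hdisj in
lemma notB : ∀ x ∈ A ∪ {u, v}, x ∉ B := by
  rintro x (hx | hx)
  · exact (hAfacts hcover hdisj x hx).2.2
  · rcases hx with rfl | hx
    · exact huB hcover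
    · rw [Set.mem_singleton_iff] at hx; subst hx; exact hvB hcover

include hcover hdisj in
lemma Bnot : ∀ x ∈ B, x ∉ A ∪ {u, v} := by
  intro x hx h
  exact notB hcover hdisj x h hx

include hcover hdisj h5 in
lemma eAA : ∀ x ∈ A ∪ {u, v}, ∀ y ∈ A ∪ {u, v}, (G'.Adj x y ↔ G.Adj x y) := by
  intro x hx y hy
  have hxB := notB hcover hdisj x hx
  have hyB := notB hcover hdisj y hy
  rw [h5]
  constructor
  · rintro (⟨_, _, h⟩ | ⟨h1, _, _⟩ | ⟨h1, _, _⟩ | ⟨_, h1, _⟩ | ⟨h1, _, _⟩ | ⟨_, h1, _⟩)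
    · exact h
    · exact absurd h1 hxB
    · exact absurd h1 hxB
    · exact absurd h1 hyB
    · exact absurd h1 hxB
    · exact absurd h1 hyB
  · intro h
    exact Or.inl ⟨hx, hy, h⟩

include hcover hdisj h5 in
lemma eBB : ∀ x ∈ B, ∀ y ∈ B, (G'.Adj x y ↔ G.Adj x y) := by
  intro x hx y hy
  obtain ⟨hxu, hxv, _⟩ := hBfacts hcover hdisj x hx
  obtain ⟨hyu, hyv, _⟩ := hBfacts hcover hdisj y hy
  rw [h5]
  constructor
  · rintro (⟨h1, _, _⟩ | ⟨_, _, h⟩ | ⟨_, h1, _⟩ | ⟨h1, _, _⟩ | ⟨_, h1, _⟩ | ⟨h1, _, _⟩)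
    · exact absurd h1 (Bnot hcover hdisj x hx)
    · exact h
    · exact absurd h1 hyu
    · exact absurd h1 hxu
    · exact absurd h1 hyv
    · exact absurd h1 hxv
  · intro h
    exact Or.inr (Or.inl ⟨hx, hy, h⟩)

include huv hcover hdisj h5 in
lemma eBu : ∀ x ∈ B, (G'.Adj x u ↔ G.Adj x v) := by
  intro x hx
  obtain ⟨hxu, hxv, _⟩ := hBfacts hcover hdisj x hx
  rw [h5]
  constructor
  · rintro (⟨h1, _, _⟩ | ⟨_, h1, _⟩ | ⟨_, _, h⟩ | ⟨h1, _, _⟩ | ⟨_, h1, _⟩ | ⟨h1, _, _⟩)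
    · exact absurd h1 (Bnot hcover hdisj x hx)
    · exact absurd h1 (huB hcover)
    · exact h
    · exact absurd h1 hxu
    · exact absurd h1 huv
    · exact absurd h1 hxv
  · intro h
    exact Or.inr (Or.inr (Or.inl ⟨hx, rfl, h⟩))

include huv hcover hdisj h5 in
lemma eBv : ∀ x ∈ B, (G'.Adj x v ↔ G.Adj x u) := by
  intro x hx
  obtain ⟨hxu, hxv, _⟩ := hBfacts hcover hdisj x hx
  rw [h5]
  constructor
  · rintro (⟨h1, _, _⟩ | ⟨_, h1, _⟩ | ⟨_, h1, _⟩ | ⟨h1, _, _⟩ | ⟨_, _, h⟩ | ⟨h1, _, _⟩)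
    · exact absurd h1 (Bnot hcover hdisj x hx)
    · exact absurd h1 (hvB hcover)
    · exact absurd h1 huv.symm
    · exact absurd h1 hxu
    · exact h
    · exact absurd h1 hxv
  · intro h
    exact Or.inr (Or.inr (Or.inr (Or.inr (Or.inl ⟨hx, rfl, h⟩))))

include huv hcover hdisj h5 in
lemma euB : ∀ y ∈ B, (G'.Adj u y ↔ G.Adj v y) := by
  intro y hy
  obtain ⟨hyu, hyv, _⟩ := hBfacts hcover hdisj y hy
  rw [h5]
  constructor
  · rintro (⟨_, h1, _⟩ | ⟨h1, _, _⟩ | ⟨_, h1, _⟩ | ⟨_, _, h⟩ | ⟨_, h1, _⟩ | ⟨h1, _, _⟩)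
    · exact absurd h1 (Bnot hcover hdisj y hy)
    · exact absurd h1 (huB hcover)
    · exact absurd h1 hyu
    · exact h
    · exact absurd h1 hyv
    · exact absurd h1 huv
  · intro h
    exact Or.inr (Or.inr (Or.inr (Or.inl ⟨rfl, hy, h⟩)))

include huv hcover hdisj h5 in
lemma evB : ∀ y ∈ B, (G'.Adj v y ↔ G.Adj u y) := by
  intro y hy
  obtain ⟨hyu, hyv, _⟩ := hBfacts hcover hdisj y hy
  rw [h5]
  constructor
  · rintro (⟨_, h1, _⟩ | ⟨h1, _, _⟩ | ⟨_, h1, _⟩ | ⟨h1, _, _⟩ | ⟨_, h1, _⟩ | ⟨_, _, h⟩)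
    · exact absurd h1 (Bnot hcover hdisj y hy)
    · exact absurd h1 (hvB hcover)
    · exact absurd h1 hyu
    · exact absurd h1 huv.symm
    · exact absurd h1 hyv
    · exact h
  · intro h
    exact Or.inr (Or.inr (Or.inr (Or.inr (Or.inr ⟨rfl, hy, h⟩))))

include hcover hdisj h5 in
lemma eAB : ∀ x ∈ A, ∀ y ∈ B, ¬ G'.Adj x y := by
  intro x hx y hy
  obtain ⟨hxu, hxv, hxB⟩ := hAfacts hcover hdisj x hx
  obtain ⟨hyu, hyv, _⟩ := hBfacts hcover hdisj y hy
  rw [h5]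
  rintro (⟨_, h1, _⟩ | ⟨h1, _, _⟩ | ⟨_, h1, _⟩ | ⟨h1, _, _⟩ | ⟨_, h1, _⟩ | ⟨h1, _, _⟩)
  · exact Bnot hcover hdisj y hy h1
  · exact hxB h1
  · exact hyu h1
  · exact hxu h1
  · exact hyv h1
  · exact hxv h1

include hcover hdisj h5 in
lemma eBA : ∀ x ∈ B, ∀ y ∈ A, ¬ G'.Adj x y := by
  intro x hx y hy
  obtain ⟨hyu, hyv, hyB⟩ := hAfacts hcover hdisj y hy
  obtain ⟨hxu, hxv, _⟩ := hBfacts hcover hdisj x hx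
  rw [h5]
  rintro (⟨h1, _, _⟩ | ⟨_, h1, _⟩ | ⟨_, h1, _⟩ | ⟨h1, _, _⟩ | ⟨_, h1, _⟩ | ⟨h1, _, _⟩)
  · exact Bnot hcover hdisj x hx h1
  · exact hyB h1
  · exact hyu h1
  · exact hxu h1
  · exact hyv h1
  · exact hxv h1


include huv hcover hdisj hno h5 in
lemma flip_back : ∀ x y : V, G.Adj x y ↔
      (x ∈ A ∪ {u, v} ∧ y ∈ A ∪ {u, v} ∧ G'.Adj x y) ∨
      (x ∈ B ∧ y ∈ B ∧ G'.Adj x y) ∨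
      (x ∈ B ∧ y = u ∧ G'.Adj x v) ∨ (x = u ∧ y ∈ B ∧ G'.Adj v y) ∨
      (x ∈ B ∧ y = v ∧ G'.Adj x u) ∨ (x = v ∧ y ∈ B ∧ G'.Adj u y) := by
  intro x y
  by_cases hxB : x ∈ B <;> by_cases hyB : y ∈ B
  · obtain ⟨hxu, hxv, _⟩ := hBfacts hcover hdisj x hxB
    obtain ⟨hyu, hyv, _⟩ := hBfacts hcover hdisj y hyB
    constructor
    · intro h; exact Or.inr (Or.inl ⟨hxB, hyB, (eBB hcover hdisj h5 x hxB y hyB).mpr h⟩)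
    · rintro (⟨h1,_,_⟩|⟨_,_,h⟩|⟨_,h1,_⟩|⟨h1,_,_⟩|⟨_,h1,_⟩|⟨h1,_,_⟩)
      · exact absurd h1 (Bnot hcover hdisj x hxB)
      · exact (eBB hcover hdisj h5 x hxB y hyB).mp h
      · exact absurd h1 hyu
      · exact absurd h1 hxu
      · exact absurd h1 hyv
      · exact absurd h1 hxv
  · obtain ⟨hxu, hxv, _⟩ := hBfacts hcover hdisj x hxB
    rcases htotV hcover y with rfl | rfl | hyA | h
    · constructor
      · intro h; exact Or.inr (Or.inr (Or.inl ⟨hxB, rfl, (eBv huv hcover hdisj h5 x hxB).mpr h⟩))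
      · rintro (⟨h1,_,_⟩|⟨_,h1,_⟩|⟨_,_,h⟩|⟨h1,_,_⟩|⟨_,h1,_⟩|⟨h1,_,_⟩)
        · exact absurd h1 (Bnot hcover hdisj x hxB)
        · exact absurd h1 (huB hcover)
        · exact (eBv huv hcover hdisj h5 x hxB).mp h
        · exact absurd h1 hxu
        · exact absurd h1 huv
        · exact absurd h1 hxv
    · constructor
      · intro h
        exact Or.inr (Or.inr (Or.inr (Or.inr (Or.inl
          ⟨hxB, rfl, (eBu huv hcover hdisj h5 x hxB).mpr h⟩))))
      · rintro (⟨h1,_,_⟩|⟨_,h1,_⟩|⟨_,h1,_⟩|⟨h1,_,_⟩|⟨_,_,h⟩|⟨h1,_,_⟩)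
        · exact absurd h1 (Bnot hcover hdisj x hxB)
        · exact absurd h1 (hvB hcover)
        · exact absurd h1 huv.symm
        · exact absurd h1 hxu
        · exact (eBu huv hcover hdisj h5 x hxB).mp h
        · exact absurd h1 hxv
    · obtain ⟨hyu, hyv, hyB'⟩ := hAfacts hcover hdisj y hyA
      constructor
      · intro h; exact absurd h.symm (hno y hyA x hxB)
      · rintro (⟨h1,_,_⟩|⟨_,h1,_⟩|⟨_,h1,_⟩|⟨h1,_,_⟩|⟨_,h1,_⟩|⟨h1,_,_⟩)
        · exact absurd h1 (Bnot hcover hdisj x hxB)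
        · exact absurd h1 hyB'
        · exact absurd h1 hyu
        · exact absurd h1 hxu
        · exact absurd h1 hyv
        · exact absurd h1 hxv
    · exact absurd h hyB
  · obtain ⟨hyu, hyv, _⟩ := hBfacts hcover hdisj y hyB
    rcases htotV hcover x with rfl | rfl | hxA | h
    · constructor
      · intro h
        exact Or.inr (Or.inr (Or.inr (Or.inl ⟨rfl, hyB, (evB huv hcover hdisj h5 y hyB).mpr h⟩)))
      · rintro (⟨_,h1,_⟩|⟨h1,_,_⟩|⟨_,h1,_⟩|⟨_,_,h⟩|⟨_,h1,_⟩|⟨h1,_,_⟩)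
        · exact absurd h1 (Bnot hcover hdisj y hyB)
        · exact absurd h1 (huB hcover)
        · exact absurd h1 hyu
        · exact (evB huv hcover hdisj h5 y hyB).mp h
        · exact absurd h1 hyv
        · exact absurd h1 huv
    · constructor
      · intro h
        exact Or.inr (Or.inr (Or.inr (Or.inr (Or.inr
          ⟨rfl, hyB, (euB huv hcover hdisj h5 y hyB).mpr h⟩))))
      · rintro (⟨_,h1,_⟩|⟨h1,_,_⟩|⟨_,h1,_⟩|⟨h1,_,_⟩|⟨_,h1,_⟩|⟨_,_,h⟩)
        · exact absurd h1 (Bnot hcover hdisj y hyB)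
        · exact absurd h1 (hvB hcover)
        · exact absurd h1 hyu
        · exact absurd h1 huv.symm
        · exact absurd h1 hyv
        · exact (euB huv hcover hdisj h5 y hyB).mp h
    · obtain ⟨hxu, hxv, hxB'⟩ := hAfacts hcover hdisj x hxA
      constructor
      · intro h; exact absurd h (hno x hxA y hyB)
      · rintro (⟨_,h1,_⟩|⟨h1,_,_⟩|⟨h1,_,_⟩|⟨h1,_,_⟩|⟨h1,_,_⟩|⟨h1,_,_⟩)
        · exact absurd h1 (Bnot hcover hdisj y hyB)
        · exact absurd h1 hxB'
        · exact absurd h1 hxB'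
        · exact absurd h1 hxu
        · exact absurd h1 hxB'
        · exact absurd h1 hxv
    · exact absurd h hxB
  · have hxm : x ∈ A ∪ ({u, v} : Set V) := by
      rcases htotV hcover x with rfl | rfl | h | h
      · exact Or.inr (by simp)
      · exact Or.inr (by simp)
      · exact Or.inl h
      · exact absurd h hxB
    have hym : y ∈ A ∪ ({u, v} : Set V) := by
      rcases htotV hcover y with rfl | rfl | h | h
      · exact Or.inr (by simp)
      · exact Or.inr (by simp)
      · exact Or.inl h
      · exact absurd h hyB
    constructor
    · intro h; exact Or.inl ⟨hxm, hym, (eAA hcover hdisj h5 x hxm y hym).mpr h⟩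
    · rintro (⟨_,_,h⟩|⟨h1,_,_⟩|⟨h1,_,_⟩|⟨_,h1,_⟩|⟨h1,_,_⟩|⟨_,h1,_⟩)
      · exact (eAA hcover hdisj h5 x hxm y hym).mp h
      · exact absurd h1 hxB
      · exact absurd h1 hxB
      · exact absurd h1 hyB
      · exact absurd h1 hxB
      · exact absurd h1 hyB

include huv hcover hdisj h5 in
lemma swap_adj [DecidableEq V] : ∀ x ∈ B ∪ ({u, v} : Set V), ∀ y ∈ B ∪ ({u, v} : Set V),
    (G'.Adj (Equiv.swap u v x) (Equiv.swap u v y) ↔ G.Adj x y) := by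
  have hum : u ∈ A ∪ ({u, v} : Set V) := Or.inr (by simp)
  have hvm : v ∈ A ∪ ({u, v} : Set V) := Or.inr (by simp)
  rintro x (hxB | hx) y (hyB | hy)
  · obtain ⟨hxu, hxv, _⟩ := hBfacts hcover hdisj x hxB
    obtain ⟨hyu, hyv, _⟩ := hBfacts hcover hdisj y hyB
    rw [Equiv.swap_apply_of_ne_of_ne hxu hxv, Equiv.swap_apply_of_ne_of_ne hyu hyv]
    exact eBB hcover hdisj h5 x hxB y hyB
  · obtain ⟨hxu, hxv, _⟩ := hBfacts hcover hdisj x hxB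
    rw [Equiv.swap_apply_of_ne_of_ne hxu hxv]
    simp only [Set.mem_insert_iff, Set.mem_singleton_iff] at hy
    rcases hy with rfl | rfl
    · rw [Equiv.swap_apply_left]; exact eBv huv hcover hdisj h5 x hxB
    · rw [Equiv.swap_apply_right]; exact eBu huv hcover hdisj h5 x hxB
  · obtain ⟨hyu, hyv, _⟩ := hBfacts hcover hdisj y hyB
    rw [Equiv.swap_apply_of_ne_of_ne hyu hyv]
    simp only [Set.mem_insert_iff, Set.mem_singleton_iff] at hx
    rcases hx with rfl | rfl
    · rw [Equiv.swap_apply_left]; exact evB huv hcover hdisj h5 y hyB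
    · rw [Equiv.swap_apply_right]; exact euB huv hcover hdisj h5 y hyB
  · simp only [Set.mem_insert_iff, Set.mem_singleton_iff] at hx hy
    rcases hx with hx | hx <;> rcases hy with hy | hy <;> rw [hx, hy]
    · rw [Equiv.swap_apply_left]
      exact iff_of_false (SimpleGraph.irrefl G') (SimpleGraph.irrefl G)
    · rw [Equiv.swap_apply_left, Equiv.swap_apply_right]
      exact (eAA hcover hdisj h5 v hvm u hum).trans (G.adj_comm v u)
    · rw [Equiv.swap_apply_right, Equiv.swap_apply_left]
      exact (eAA hcover hdisj h5 u hum v hvm).trans (G.adj_comm u v)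
    · rw [Equiv.swap_apply_right]
      exact iff_of_false (SimpleGraph.irrefl G') (SimpleGraph.irrefl G)

end Regional

lemma isWhitneyFlip_symm {V : Type*} {G G' : SimpleGraph V} (h : IsWhitneyFlip G G') :
    IsWhitneyFlip G' G := by
  obtain ⟨u, v, A, B, huv, hcover, hdisj, hno, h5⟩ := h
  exact ⟨u, v, A, B, huv, hcover, hdisj, eAB hcover hdisj h5,
    flip_back huv hcover hdisj hno h5⟩


lemma count_le {β : Type*} [Fintype β] (m : ℕ) {G G' : SimpleGraph β}
    (h : IsWhitneyFlip G G') :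
    graphCount (cycleGraph (m+3)) G ≤ graphCount (cycleGraph (m+3)) G' := by
  classical
  obtain ⟨u, v, A, B, huv, hcover, hdisj, hno, h5⟩ := h
  set τ : β ≃ β := Equiv.swap u v with hτ
  have hτmem : ∀ x ∈ B ∪ ({u, v} : Set β), τ x ∈ B ∪ ({u, v} : Set β) := by
    rintro x (hx | hx)
    · obtain ⟨h1, h2, _⟩ := hBfacts hcover hdisj x hx
      rw [hτ, Equiv.swap_apply_of_ne_of_ne h1 h2]
      exact Or.inl hx
    · simp only [Set.mem_insert_iff, Set.mem_singleton_iff] at hx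
      rcases hx with hx | hx <;> rw [hx]
      · rw [hτ, Equiv.swap_apply_left]; right; simp
      · rw [hτ, Equiv.swap_apply_right]; right; simp
  have himg : ∀ S : Finset β, (S : Set β) ⊆ B ∪ {u, v} →
      ((S.image τ : Finset β) : Set β) ⊆ B ∪ {u, v} := by
    intro S hS x hx
    rw [Finset.coe_image] at hx
    obtain ⟨s, hs, rfl⟩ := hx
    exact hτmem s (hS hs)
  have key : ∀ S : Finset β, Nonempty (G.induce (S : Set β) ≃g cycleGraph (m+3)) →
      Nonempty (G'.induce (((if (S : Set β) ⊆ B ∪ {u, v} then S.image τ else S : Finset β)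
        : Finset β) : Set β) ≃g cycleGraph (m+3)) := by
    intro S hS
    obtain ⟨e⟩ := hS
    by_cases hsub : (S : Set β) ⊆ B ∪ {u, v}
    · rw [if_pos hsub]
      have hmemimg : ∀ x : {a // a ∈ (S : Set β)},
          (τ ↑x : β) ∈ ((S.image τ : Finset β) : Set β) := by
        intro x
        rw [Finset.coe_image]
        exact ⟨↑x, x.2, rfl⟩
      have hmemback : ∀ y : {a // a ∈ ((S.image τ : Finset β) : Set β)},
          (τ ↑y : β) ∈ (S : Set β) := by
        intro y
        obtain ⟨s, hs, hseq⟩ := Finset.mem_image.mp (Finset.mem_coe.mp y.2)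
        have h3 : τ ↑y = s := by
          have h4 := congrArg τ hseq
          have h5' : τ (τ s) = s := Equiv.swap_apply_self u v s
          rw [h5'] at h4
          exact h4.symm
        rw [h3]
        exact Finset.mem_coe.mpr hs
      refine ⟨(RelIso.mk
        ⟨fun y => ⟨τ ↑y, hmemback y⟩, fun x => ⟨τ ↑x, hmemimg x⟩,
          fun y => by apply Subtype.ext; simp [hτ, Equiv.swap_apply_self],
          fun x => by apply Subtype.ext; simp [hτ, Equiv.swap_apply_self]⟩ ?_).trans e⟩
      intro a b
      show G.Adj (τ ↑a) (τ ↑b) ↔ G'.Adj ↑a ↑b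
      have h1 := swap_adj huv hcover hdisj h5 (τ ↑a) (hτmem _ (himg S hsub a.2))
        (τ ↑b) (hτmem _ (himg S hsub b.2))
      simp only [hτ, Equiv.swap_apply_self] at h1
      exact h1.symm
    · rw [if_neg hsub]
      obtain ⟨a0, ha0S, ha0B⟩ : ∃ a, a ∈ (S : Set β) ∧ a ∉ B ∪ ({u, v} : Set β) :=
        Set.not_subset.mp hsub
      have ha0A : a0 ∈ A := by
        rcases htotV hcover a0 with h | h | h | h
        · exact absurd (Or.inr (by simp [h])) ha0B
        · exact absurd (Or.inr (by simp [h])) ha0B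
        · exact h
        · exact absurd (Or.inl h) ha0B
      by_cases hBS : ∃ b, b ∈ (S : Set β) ∧ b ∈ B
      · obtain ⟨b0, hb0S, hb0B⟩ := hBS
        set P : Set (Fin (m+3)) := {i | (↑(e.symm i) : β) ∈ B} with hP
        set Q : Set (Fin (m+3)) := {i | (↑(e.symm i) : β) ∈ A} with hQ
        have hcr : ∀ i j, (cycleGraph (m+3)).Adj i j → i ∈ P → j ∈ Q → False := by
          intro i j hadj hi hj
          have h1 : (G.induce (S : Set β)).Adj (e.symm i) (e.symm j) :=
            e.symm.map_adj_iff.mpr hadj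
          exact hno _ hj _ hi h1.symm
        have hdisjPQ : ∀ i, i ∈ P → i ∈ Q → False :=
          fun i hi hj => (hAfacts hcover hdisj _ hj).2.2 hi
        have hPn : P.Nonempty := ⟨e ⟨b0, hb0S⟩, by
          rw [hP]; simp only [Set.mem_setOf_eq, RelIso.symm_apply_apply]; exact hb0B⟩
        have hQn : Q.Nonempty := ⟨e ⟨a0, ha0S⟩, by
          rw [hQ]; simp only [Set.mem_setOf_eq, RelIso.symm_apply_apply]; exact ha0A⟩
        have hclass : ∀ i : Fin (m+3),
            (↑(e.symm i) : β) = u ∨ (↑(e.symm i) : β) = v ∨ i ∈ P ∨ i ∈ Q := by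
          intro i
          rcases htotV hcover (↑(e.symm i) : β) with h | h | h | h
          · exact Or.inl h
          · exact Or.inr (Or.inl h)
          · exact Or.inr (Or.inr (Or.inr h))
          · exact Or.inr (Or.inr (Or.inl h))
        have hmemeq : ∀ (i : Fin (m+3)) (w : β) (hw : w ∈ (S : Set β)),
            (↑(e.symm i) : β) = w → i = e ⟨w, hw⟩ := by
          intro i w hw h
          have h2 : e.symm i = ⟨w, hw⟩ := Subtype.ext h
          rw [← h2, RelIso.apply_symm_apply]
        have huS : u ∈ (S : Set β) := by
          by_contra huS
          by_cases hvS : v ∈ (S : Set β)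
          · refine conn_lem P Q hcr hdisjPQ (e ⟨v, hvS⟩) ?_ ?_ ?_ hPn hQn
            · rw [hP]; simp only [Set.mem_setOf_eq, RelIso.symm_apply_apply]
              exact hvB hcover
            · rw [hQ]; simp only [Set.mem_setOf_eq, RelIso.symm_apply_apply]
              exact hvA hcover
            · intro i
              rcases hclass i with h | h | h | h
              · exact absurd (h ▸ (e.symm i).2) huS
              · exact Or.inl (hmemeq i v hvS h)
              · exact Or.inr (Or.inl h)
              · exact Or.inr (Or.inr h)
          · refine conn_lem' P Q hcr hdisjPQ ?_ hPn hQn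
            intro i
            rcases hclass i with h | h | h | h
            · exact absurd (h ▸ (e.symm i).2) huS
            · exact absurd (h ▸ (e.symm i).2) hvS
            · exact Or.inl h
            · exact Or.inr h
        have hvS : v ∈ (S : Set β) := by
          by_contra hvS
          refine conn_lem P Q hcr hdisjPQ (e ⟨u, huS⟩) ?_ ?_ ?_ hPn hQn
          · rw [hP]; simp only [Set.mem_setOf_eq, RelIso.symm_apply_apply]
            exact huB hcover
          · rw [hQ]; simp only [Set.mem_setOf_eq, RelIso.symm_apply_apply]
            exact huA hcover
          · intro i
            rcases hclass i with h | h | h | h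
            · exact Or.inl (hmemeq i u huS h)
            · exact absurd (h ▸ (e.symm i).2) hvS
            · exact Or.inr (Or.inl h)
            · exact Or.inr (Or.inr h)
        set p : Fin (m+3) := e ⟨u, huS⟩ with hp
        set q : Fin (m+3) := e ⟨v, hvS⟩ with hq
        have hpq : p ≠ q := by
          intro h
          rw [hp, hq] at h
          have h2 := e.toEquiv.injective h
          exact huv (congrArg Subtype.val h2)
        have htot4 : ∀ i, i = p ∨ i = q ∨ i ∈ P ∨ i ∈ Q := by
          intro i
          rcases hclass i with h | h | h | h
          · exact Or.inl (hmemeq i u huS h)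
          · exact Or.inr (Or.inl (hmemeq i v hvS h))
          · exact Or.inr (Or.inr (Or.inl h))
          · exact Or.inr (Or.inr (Or.inr h))
        have hpP : p ∉ P := by
          rw [hp, hP]; simp only [Set.mem_setOf_eq, RelIso.symm_apply_apply]
          exact huB hcover
        have hqP : q ∉ P := by
          rw [hq, hP]; simp only [Set.mem_setOf_eq, RelIso.symm_apply_apply]
          exact hvB hcover
        have harc : ∀ i ∈ P, p + q - i ∈ P :=
          fun i hi => arc_lem P Q hcr p q hpq hpP hqP htot4 hi
        have hePmem : ∀ x : {a // a ∈ (S : Set β)}, (↑x : β) ∈ B → e x ∈ P := by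
          intro x hx
          rw [hP]; simp only [Set.mem_setOf_eq, RelIso.symm_apply_apply]; exact hx
        have heQmem : ∀ x : {a // a ∈ (S : Set β)}, (↑x : β) ∈ A → e x ∈ Q := by
          intro x hx
          rw [hQ]; simp only [Set.mem_setOf_eq, RelIso.symm_apply_apply]; exact hx
        set g : {a // a ∈ (S : Set β)} → Fin (m+3) :=
          fun x => if (↑x : β) ∈ B then p + q - e x else e x with hg
        have hginj : Function.Injective g := by
          intro x y hxy
          rw [hg] at hxy
          dsimp only at hxy
          by_cases hx : (↑x : β) ∈ B <;> by_cases hy : (↑y : β) ∈ B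
          · rw [if_pos hx, if_pos hy] at hxy
            have h2 : e x = e y := by linear_combination -hxy
            exact e.toEquiv.injective h2
          · rw [if_pos hx, if_neg hy] at hxy
            exfalso
            have h1 : p + q - e x ∈ P := harc _ (hePmem x hx)
            rw [hxy] at h1
            have h2 : (↑(e.symm (e y)) : β) ∈ B := h1
            rw [RelIso.symm_apply_apply] at h2
            exact hy h2
          · rw [if_neg hx, if_pos hy] at hxy
            exfalso
            have h1 : p + q - e y ∈ P := harc _ (hePmem y hy)
            rw [← hxy] at h1
            have h2 : (↑(e.symm (e x)) : β) ∈ B := h1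
            rw [RelIso.symm_apply_apply] at h2
            exact hx h2
          · rw [if_neg hx, if_neg hy] at hxy
            exact e.toEquiv.injective hxy
        have hgbij : Function.Bijective g := by
          rw [Fintype.bijective_iff_injective_and_card]
          refine ⟨hginj, ?_⟩
          exact Fintype.card_congr e.toEquiv
        have hGadj : ∀ x y : {a // a ∈ (S : Set β)},
            ((cycleGraph (m+3)).Adj (e x) (e y) ↔ G.Adj ↑x ↑y) :=
          fun x y => e.map_adj_iff
        have hBadj : ∀ x y : {a // a ∈ (S : Set β)}, (↑x : β) ∈ B → (↑y : β) ∉ B →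
            ((cycleGraph (m+3)).Adj (g x) (g y) ↔ G'.Adj ↑x ↑y) := by
          intro x y hx hy
          rw [hg]
          dsimp only
          rw [if_pos hx, if_neg hy]
          rcases htotV hcover (↑y : β) with h | h | h | h
          · have hey : e y = p := by rw [hp]; exact congrArg _ (Subtype.ext h)
            have h3 : (cycleGraph (m+3)).Adj (p + q - e x) p ↔
                (cycleGraph (m+3)).Adj (e x) q := by
              have h4 := adj_reflect (m := m) (c := p + q) (i := e x) (j := q)
              rwa [show p + q - q = p from by ring] at h4
            rw [hey, h3, hq, hGadj x ⟨v, hvS⟩, h]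
            exact (eBu huv hcover hdisj h5 ↑x hx).symm
          · have hey : e y = q := by rw [hq]; exact congrArg _ (Subtype.ext h)
            have h3 : (cycleGraph (m+3)).Adj (p + q - e x) q ↔
                (cycleGraph (m+3)).Adj (e x) p := by
              have h4 := adj_reflect (m := m) (c := p + q) (i := e x) (j := p)
              rwa [show p + q - p = q from by ring] at h4
            rw [hey, h3, hp, hGadj x ⟨u, huS⟩, h]
            exact (eBv huv hcover hdisj h5 ↑x hx).symm
          · constructor
            · intro hadj
              exact absurd hadj (fun hadj => hcr _ _ hadj (harc _ (hePmem x hx)) (heQmem y h))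
            · intro hadj
              exact absurd hadj (eBA hcover hdisj h5 ↑x hx ↑y h)
          · exact absurd h hy
        refine ⟨RelIso.mk (Equiv.ofBijective g hgbij) ?_⟩
        intro x y
        show (cycleGraph (m+3)).Adj (g x) (g y) ↔ G'.Adj ↑x ↑y
        by_cases hx : (↑x : β) ∈ B <;> by_cases hy : (↑y : β) ∈ B
        · rw [hg]
          dsimp only
          rw [if_pos hx, if_pos hy, adj_reflect, hGadj]
          exact (eBB hcover hdisj h5 ↑x hx ↑y hy).symm
        · exact hBadj x y hx hy
        · rw [(cycleGraph (m+3)).adj_comm (g x) (g y), G'.adj_comm ↑x ↑y]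
          exact hBadj y x hy hx
        · rw [hg]
          dsimp only
          rw [if_neg hx, if_neg hy, hGadj]
          have hxm : (↑x : β) ∈ A ∪ ({u, v} : Set β) := by
            rcases htotV hcover (↑x : β) with h | h | h | h
            · exact Or.inr (by simp [h])
            · exact Or.inr (by simp [h])
            · exact Or.inl h
            · exact absurd h hx
          have hym : (↑y : β) ∈ A ∪ ({u, v} : Set β) := by
            rcases htotV hcover (↑y : β) with h | h | h | h
            · exact Or.inr (by simp [h])
            · exact Or.inr (by simp [h])
            · exact Or.inl h
            · exact absurd h hy
          exact (eAA hcover hdisj h5 ↑x hxm ↑y hym).symm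
      · push_neg at hBS
        refine ⟨(RelIso.mk (Equiv.refl _) ?_).trans e⟩
        intro a b
        show G.Adj ↑a ↑b ↔ G'.Adj ↑a ↑b
        have ham : (↑a : β) ∈ A ∪ ({u, v} : Set β) := by
          rcases htotV hcover (↑a : β) with h | h | h | h
          · exact Or.inr (by simp [h])
          · exact Or.inr (by simp [h])
          · exact Or.inl h
          · exact absurd h (hBS ↑a a.2)
        have hbm : (↑b : β) ∈ A ∪ ({u, v} : Set β) := by
          rcases htotV hcover (↑b : β) with h | h | h | h
          · exact Or.inr (by simp [h])
          · exact Or.inr (by simp [h])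
          · exact Or.inl h
          · exact absurd h (hBS ↑b b.2)
        exact (eAA hcover hdisj h5 ↑a ham ↑b hbm).symm
  refine Nat.card_le_card_of_injective
    (fun s => ⟨if (s.1 : Set β) ⊆ B ∪ {u, v} then s.1.image τ else s.1, key s.1 s.2⟩) ?_
  rintro ⟨S1, h1⟩ ⟨S2, h2⟩ heq
  simp only [Subtype.mk.injEq] at heq ⊢
  by_cases c1 : (S1 : Set β) ⊆ B ∪ {u, v} <;> by_cases c2 : (S2 : Set β) ⊆ B ∪ {u, v}
  · rw [if_pos c1, if_pos c2] at heq
    exact Finset.image_injective τ.injective heq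
  · exfalso
    rw [if_pos c1, if_neg c2] at heq
    exact c2 (heq ▸ himg S1 c1)
  · exfalso
    rw [if_neg c1, if_pos c2] at heq
    exact c1 (heq ▸ himg S2 c2)
  · rwa [if_neg c1, if_neg c2] at heq

end WhitneyAux

/-- For `n ≥ 3`, the number of induced `n`-cycles of a graph is invariant under Whitney
flips: `i(Cₙ, G) = i(Cₙ, G')` whenever `G'` is a Whitney flip of `G`. -/
theorem cycleCount_invariant_of_whitneyFlip (n : ℕ) (hn : 3 ≤ n)
    {β : Type*} [Fintype β] (G G' : SimpleGraph β) (hGG' : IsWhitneyFlip G G') :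
    graphCount (SimpleGraph.cycleGraph n) G = graphCount (SimpleGraph.cycleGraph n) G' := by
  obtain ⟨m, rfl⟩ : ∃ m, n = m + 3 := ⟨n - 3, by omega⟩
  exact le_antisymm (WhitneyAux.count_le m hGG')
    (WhitneyAux.count_le m (WhitneyAux.isWhitneyFlip_symm hGG'))
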